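/- There exist a constant C > 0 and a function A : {0,1}* × {0,1}* → {−1, 0, 1, ⊥} such that for every integer h ≥ 1 and every weight function w : {1,…,h} → ℝ_{>0}, there is a prefix-free code α : {1,…,h} → {0,1}* satisfying: (1) for each i ∈ {1,…,h}, |α(i)| ≤ log₂ W − log₂ w(i) + C·(log₂(log₂ h + 2) + 1), where W := Σ_{j=1}^h w(j); and (2) for all i, j ∈ {1,…,h}, A(α(i), α(j)) equals 0 if j = i, equals 1 if j = i + 1, equals −1 if j = i − 1, and equals ⊥ otherwise. -/

import Mathlib

attribute [local instance] Classical.propDecidable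

namespace RowCode

def bval (l : List Bool) : ℕ := l.foldl (fun a b => 2 * a + (if b then 1 else 0)) 0

lemma bval_concat (l : List Bool) (b : Bool) :
    bval (l ++ [b]) = 2 * bval l + (if b then 1 else 0) := by
  simp [bval, List.foldl_append]

def toBits : ℕ → ℕ → List Bool
  | 0, _ => []
  | (ℓ+1), n => toBits ℓ (n / 2) ++ [decide (n % 2 = 1)]

@[simp] lemma toBits_length (ℓ n : ℕ) : (toBits ℓ n).length = ℓ := by
  induction ℓ generalizing n with
  | zero => rfl
  | succ ℓ ih => simp [toBits, ih]

lemma bval_toBits (ℓ n : ℕ) : bval (toBits ℓ n) = n % 2 ^ ℓ := by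
  induction ℓ generalizing n with
  | zero => simp [toBits, bval, Nat.mod_one]
  | succ ℓ ih =>
    rw [toBits, bval_concat, ih]
    have hif : (if decide (n % 2 = 1) = true then 1 else 0) = n % 2 := by
      rcases Nat.mod_two_eq_zero_or_one n with h | h <;> simp [h]
    rw [hif, pow_succ', Nat.mod_mul]
    ring

lemma toBits_inj {ℓ n n' : ℕ} (hn : n < 2 ^ ℓ) (hn' : n' < 2 ^ ℓ)
    (h : toBits ℓ n = toBits ℓ n') : n = n' := by
  have := congrArg bval h
  rwa [bval_toBits, bval_toBits, Nat.mod_eq_of_lt hn, Nat.mod_eq_of_lt hn'] at this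

lemma toBits_add (a b n : ℕ) : toBits (a + b) n = toBits a (n / 2 ^ b) ++ toBits b n := by
  induction b generalizing n with
  | zero => simp [toBits]
  | succ b ih =>
    have h : a + (b + 1) = (a + b) + 1 := rfl
    rw [h, toBits, ih, toBits, List.append_assoc]
    congr 2
    rw [Nat.div_div_eq_div_mul]
    ring_nf

lemma toBits_take {m ℓ : ℕ} (h : m ≤ ℓ) (n : ℕ) :
    (toBits ℓ n).take m = toBits m (n / 2 ^ (ℓ - m)) := by
  obtain ⟨d, rfl⟩ : ∃ d, ℓ = m + d := ⟨ℓ - m, by omega⟩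
  rw [toBits_add]
  have := List.take_left' (l₂ := toBits d n) (toBits_length m (n / 2 ^ d))
  simpa using this

lemma toBits_getElem {m ℓ : ℕ} (h : m < ℓ) (n : ℕ) :
    (toBits ℓ n)[m]? = some (decide (n / 2 ^ (ℓ - m - 1) % 2 = 1)) := by
  obtain ⟨d, rfl⟩ : ∃ d, ℓ = (m + 1) + d := ⟨ℓ - m - 1, by omega⟩
  have he : (m + 1) + d - m - 1 = d := by omega
  rw [he, toBits_add, List.getElem?_append_left (by simp), toBits]
  have hlen : (toBits m (n / 2 ^ d / 2)).length = m := toBits_length ..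
  have : (toBits m (n / 2 ^ d / 2) ++ [decide (n / 2 ^ d % 2 = 1)])[(toBits m (n / 2 ^ d / 2)).length]? = some (decide (n / 2 ^ d % 2 = 1)) := List.getElem?_concat_length
  rw [hlen] at this
  exact this

end RowCode
namespace RowCode

/-- the split condition: `u` and `v` agree on the first `m` bits, then `u` has `0`, `v` has `1`. -/
def splitCond (m : ℕ) (u v : List Bool) : Prop :=
  u.take m = v.take m ∧ u[m]? = some false ∧ v[m]? = some true

lemma split_lt {ℓ ℓ' n n' m : ℕ} (hn : n < 2 ^ ℓ) (hn' : n' < 2 ^ ℓ')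
    (hs : splitCond m (toBits ℓ n) (toBits ℓ' n')) :
    n * 2 ^ ℓ' < n' * 2 ^ ℓ := by
  obtain ⟨h1, h2, h3⟩ := hs
  have hmℓ : m < ℓ := by
    have := List.getElem?_eq_some_iff.mp h2
    simpa using this.1
  have hmℓ' : m < ℓ' := by
    have := List.getElem?_eq_some_iff.mp h3
    simpa using this.1
  set d := ℓ - m - 1 with hd
  set d' := ℓ' - m - 1 with hd'
  have hℓ : ℓ = m + 1 + d := by omega
  have hℓ' : ℓ' = m + 1 + d' := by omega
  -- the bits at position m
  rw [toBits_getElem hmℓ] at h2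
  rw [toBits_getElem hmℓ'] at h3
  have hb2 : n / 2 ^ d % 2 = 0 := by
    have := Option.some.inj h2
    rcases Nat.mod_two_eq_zero_or_one (n / 2 ^ d) with h | h
    · exact h
    · rw [h] at this; simp at this
  have hb3 : n' / 2 ^ d' % 2 = 1 := by
    have := Option.some.inj h3
    rcases Nat.mod_two_eq_zero_or_one (n' / 2 ^ d') with h | h
    · rw [h] at this; simp at this
    · exact h
  -- the common prefix
  rw [toBits_take (le_of_lt hmℓ), toBits_take (le_of_lt hmℓ')] at h1
  have hdd : ℓ - m = d + 1 := by omega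
  have hdd' : ℓ' - m = d' + 1 := by omega
  rw [hdd, hdd'] at h1
  have hPlt : n / 2 ^ (d + 1) < 2 ^ m := by
    rw [Nat.div_lt_iff_lt_mul (by positivity), ← pow_add]
    calc n < 2 ^ ℓ := hn
    _ = 2 ^ (m + (d+1)) := by rw [hℓ]; ring_nf
  have hPlt' : n' / 2 ^ (d' + 1) < 2 ^ m := by
    rw [Nat.div_lt_iff_lt_mul (by positivity), ← pow_add]
    calc n' < 2 ^ ℓ' := hn'
    _ = 2 ^ (m + (d'+1)) := by rw [hℓ']; ring_nf
  have hP : n / 2 ^ (d + 1) = n' / 2 ^ (d' + 1) := toBits_inj hPlt hPlt' h1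
  set P := n / 2 ^ (d + 1) with hPdef
  -- n / 2^d = 2 P,  n' / 2^d' = 2 P + 1
  have e1 : n / 2 ^ d = 2 * P := by
    have : n / 2 ^ d / 2 = P := by
      rw [Nat.div_div_eq_div_mul, hPdef, pow_succ]
    omega
  have e2 : n' / 2 ^ d' = 2 * P + 1 := by
    have h6 : n' / 2 ^ d' / 2 = P := by
      rw [Nat.div_div_eq_div_mul, ← pow_succ]
      exact hP.symm
    omega
  have hnlt : n < (2 * P + 1) * 2 ^ d := by
    have h5 : n < (n / 2 ^ d + 1) * 2 ^ d :=
      (Nat.div_lt_iff_lt_mul (by positivity)).mp (Nat.lt_succ_self _)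
    calc n < (n / 2 ^ d + 1) * 2 ^ d := h5
    _ = (2 * P + 1) * 2 ^ d := by rw [e1]
  have hnge : (2 * P + 1) * 2 ^ d' ≤ n' := by
    calc (2 * P + 1) * 2 ^ d' = (n' / 2 ^ d') * 2 ^ d' := by rw [e2]
    _ ≤ n' := Nat.div_mul_le_self ..
  calc n * 2 ^ ℓ' < ((2 * P + 1) * 2 ^ d) * 2 ^ ℓ' := by
        exact (Nat.mul_lt_mul_right (a := 2 ^ ℓ') (by positivity)).mpr hnlt
  _ = ((2 * P + 1) * 2 ^ d') * 2 ^ ℓ := by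
        rw [mul_assoc, mul_assoc, ← pow_add, ← pow_add]
        congr 2
        omega
  _ ≤ n' * 2 ^ ℓ := Nat.mul_le_mul_right _ hnge

def lcpLen : List Bool → List Bool → ℕ
  | a :: u, b :: v => if a = b then lcpLen u v + 1 else 0
  | _, _ => 0

lemma lcpLen_take (u v : List Bool) : u.take (lcpLen u v) = v.take (lcpLen u v) := by
  induction u generalizing v with
  | nil => cases v <;> simp [lcpLen]
  | cons a u ih =>
    cases v with
    | nil => simp [lcpLen]
    | cons b v =>
      by_cases hab : a = b
      · simp [lcpLen, hab, ih]
      · simp [lcpLen, hab]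

lemma lcpLen_bits {u v : List Bool} (hu : ¬ u <+: v) (hv : ¬ v <+: u) :
    ∃ x y : Bool, u[lcpLen u v]? = some x ∧ v[lcpLen u v]? = some y ∧ x ≠ y := by
  induction u generalizing v with
  | nil => exact absurd (List.nil_prefix) hu
  | cons a u ih =>
    cases v with
    | nil => exact absurd (List.nil_prefix) hv
    | cons b v =>
      by_cases hab : a = b
      · subst hab
        rw [List.cons_prefix_cons] at hu hv
        simp only [true_and, ne_eq] at hu hv
        obtain ⟨x, y, hx, hy, hxy⟩ := ih hu hv
        exact ⟨x, y, by simp [lcpLen, hx], by simp [lcpLen, hy], hxy⟩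
      · exact ⟨a, b, by simp [lcpLen, hab], by simp [lcpLen, hab], hab⟩

lemma lcpLen_le_left (u v : List Bool) : lcpLen u v ≤ u.length := by
  induction u generalizing v with
  | nil => cases v <;> simp [lcpLen]
  | cons a u ih =>
    cases v with
    | nil => simp [lcpLen]
    | cons b v =>
      by_cases hab : a = b <;> simp [lcpLen, hab]
      exact ih v

def enc (t : ℕ) : List Bool :=
  List.replicate (Nat.log 2 (t+1)) false ++ toBits (Nat.log 2 (t+1) + 1) (t+1)

lemma enc_length (t : ℕ) : (enc t).length = 2 * Nat.log 2 (t+1) + 1 := by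
  simp [enc]; ring

noncomputable def dec (u : List Bool) : Option (ℕ × List Bool) :=
  let k := (u.takeWhile (fun b => !b)).length
  if 2*k+1 ≤ u.length then some (bval ((u.drop k).take (k+1)) - 1, u.drop (2*k+1)) else none

lemma takeWhile_replicate_true (k : ℕ) (s : List Bool) :
    ((List.replicate k false ++ (true :: s)).takeWhile (fun b => !b)) = List.replicate k false := by
  induction k with
  | zero => simp [List.takeWhile]
  | succ k ih => simp [List.replicate_succ, List.takeWhile, ih]

lemma toBits_head (k n : ℕ) (h1 : 2 ^ k ≤ n) (h2 : n < 2 ^ (k+1)) :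
    toBits (k+1) n = true :: toBits k n := by
  have : (1:ℕ) + k = k + 1 := by omega
  rw [← this, toBits_add]
  have hdiv : n / 2 ^ k = 1 := by
    apply Nat.div_eq_of_lt_le
    · simpa using h1
    · rw [pow_succ] at h2; omega
  rw [hdiv]
  rfl

lemma dec_enc (t : ℕ) (r : List Bool) : dec (enc t ++ r) = some (t, r) := by
  set k := Nat.log 2 (t+1) with hk
  have h1 : 2 ^ k ≤ t + 1 := Nat.pow_log_le_self 2 (by omega)
  have h2 : t + 1 < 2 ^ (k+1) := Nat.lt_pow_succ_log_self (by norm_num) _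
  have hhead : toBits (k+1) (t+1) = true :: toBits k (t+1) := toBits_head k (t+1) h1 h2
  have hu : enc t ++ r = List.replicate k false ++ (true :: (toBits k (t+1) ++ r)) := by
    rw [enc, ← hk, hhead]
    simp
  rw [hu, dec]
  have htw : ((List.replicate k false ++ (true :: (toBits k (t+1) ++ r))).takeWhile
      (fun b => !b)).length = k := by
    rw [takeWhile_replicate_true]; simp
  simp only [htw]
  have hlen : (List.replicate k false ++ (true :: (toBits k (t+1) ++ r))).length
      = 2*k+1 + r.length := by simp; ring
  rw [if_pos (by omega)]
  have hdropk : (List.replicate k false ++ (true :: (toBits k (t+1) ++ r))).drop k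
      = toBits (k+1) (t+1) ++ r := by
    rw [List.drop_append_of_le_length (by simp), hhead]
    simp
  have hdrop2k : (List.replicate k false ++ (true :: (toBits k (t+1) ++ r))).drop (2*k+1)
      = r := by
    have : 2*k+1 = k + (k+1) := by omega
    rw [this, ← List.drop_drop, hdropk, List.drop_append_of_le_length (by simp)]
    simp
  rw [hdropk, hdrop2k]
  have htake : (toBits (k+1) (t+1) ++ r).take (k+1) = toBits (k+1) (t+1) :=
    List.take_left' (toBits_length ..)
  rw [htake, bval_toBits, Nat.mod_eq_of_lt h2]
  simp

noncomputable def Adec (u v : List Bool) : Option ℤ :=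
  if u = v then some 0 else
  match dec u, dec v with
  | some (am, u1), some (bm, v1) =>
    match dec u1, dec v1 with
    | some (ap, c), some (bp, c') =>
      if ap = bm ∧ splitCond ap c c' then some 1
      else if bp = am ∧ splitCond bp c' c then some (-1) else none
    | _, _ => none
  | _, _ => none

end RowCode
namespace RowCode

noncomputable section

def Wt (h : ℕ) (w : ℕ → ℝ) : ℝ := ∑ j ∈ Finset.Icc 1 h, w j

def mm (h : ℕ) (w : ℕ → ℝ) (i : ℕ) : ℕ :=
  min ⌈Real.logb 2 (Wt h w / w i)⌉₊ (2 * Nat.clog 2 h + 2)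

def LL (h : ℕ) (w : ℕ → ℝ) (i : ℕ) : ℕ := mm h w i + 3

def qq (h : ℕ) (w : ℕ → ℝ) (i : ℕ) : ℝ := (1/2 : ℝ) ^ mm h w i

def TT (h : ℕ) (w : ℕ → ℝ) (i : ℕ) : ℝ := ∑ j ∈ Finset.Icc 1 i, qq h w j

def nn (h : ℕ) (w : ℕ → ℝ) (i : ℕ) : ℕ := ⌊TT h w (i-1) * 2 ^ (LL h w i - 1)⌋₊ + 1

def cs (h : ℕ) (w : ℕ → ℝ) (i : ℕ) : List Bool := toBits (LL h w i) (nn h w i)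

/-- the dyadic position of codeword `i`. -/
def aa (h : ℕ) (w : ℕ → ℝ) (i : ℕ) : ℝ := (nn h w i : ℝ) / 2 ^ (LL h w i)

variable {h : ℕ} {w : ℕ → ℝ}

lemma Wt_pos (hh : 1 ≤ h) (hw : ∀ i ∈ Finset.Icc 1 h, 0 < w i) : 0 < Wt h w :=
  Finset.sum_pos hw ⟨1, by simp [Finset.mem_Icc]; omega⟩

lemma w_le_Wt (hw : ∀ i ∈ Finset.Icc 1 h, 0 < w i) {i : ℕ} (hi : i ∈ Finset.Icc 1 h) :
    w i ≤ Wt h w :=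
  Finset.single_le_sum (fun j hj => (hw j hj).le) hi

lemma qq_pos (i : ℕ) : 0 < qq h w i := by unfold qq; positivity

lemma TT_nonneg (i : ℕ) : 0 ≤ TT h w i :=
  Finset.sum_nonneg fun j _ => (qq_pos j).le

lemma TT_mono {i j : ℕ} (hij : i ≤ j) : TT h w i ≤ TT h w j :=
  Finset.sum_le_sum_of_subset_of_nonneg
    (Finset.Icc_subset_Icc_right hij) (fun k _ _ => (qq_pos k).le)

lemma TT_succ {i : ℕ} (hi : 1 ≤ i) : TT h w i = TT h w (i-1) + qq h w i := by
  unfold TT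
  have : i = (i - 1) + 1 := by omega
  rw [this, Finset.sum_Icc_succ_top (by omega)]
  congr 1 <;> omega

lemma qq_le (hh : 1 ≤ h) (hw : ∀ i ∈ Finset.Icc 1 h, 0 < w i)
    {i : ℕ} (hi : i ∈ Finset.Icc 1 h) :
    qq h w i ≤ w i / Wt h w + (1/2 : ℝ) ^ (2 * Nat.clog 2 h + 2) := by
  have hWpos := Wt_pos hh hw
  have hwi := hw i hi
  have hdivpos : 0 < Wt h w / w i := by positivity
  rcases min_cases ⌈Real.logb 2 (Wt h w / w i)⌉₊ (2 * Nat.clog 2 h + 2) with ⟨he, _⟩ | ⟨he, _⟩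
  · -- mm = ceil of the log
    have h1 : qq h w i ≤ w i / Wt h w := by
      unfold qq mm
      rw [he]
      set k := ⌈Real.logb 2 (Wt h w / w i)⌉₊ with hk
      have e1 : ((1:ℝ)/2) ^ k = ((2:ℝ) ^ (k:ℝ))⁻¹ := by
        rw [div_pow, one_pow, one_div, ← Real.rpow_natCast]
      rw [e1]
      have e2 : (2:ℝ) ^ (Real.logb 2 (Wt h w / w i)) = Wt h w / w i :=
        Real.rpow_logb (by norm_num) (by norm_num) hdivpos
      have e3 : (2:ℝ) ^ (Real.logb 2 (Wt h w / w i)) ≤ (2:ℝ) ^ (k:ℝ) :=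
        Real.rpow_le_rpow_of_exponent_le (by norm_num) (Nat.le_ceil _)
      rw [e2] at e3
      have e4 : ((2:ℝ) ^ (k:ℝ))⁻¹ ≤ (Wt h w / w i)⁻¹ := inv_anti₀ hdivpos e3
      rwa [inv_div] at e4
    linarith [pow_pos (by norm_num : (0:ℝ) < 1/2) (2 * Nat.clog 2 h + 2)]
  · have h1 : qq h w i = (1/2 : ℝ) ^ (2 * Nat.clog 2 h + 2) := by
      unfold qq mm; rw [he]
    rw [h1]
    have : 0 ≤ w i / Wt h w := by positivity
    linarith

end

end RowCode
namespace RowCode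

variable {h : ℕ} {w : ℕ → ℝ}

lemma TT_le_two (hh : 1 ≤ h) (hw : ∀ i ∈ Finset.Icc 1 h, 0 < w i) : TT h w h ≤ 2 := by
  have hWpos := Wt_pos hh hw
  set c := Nat.clog 2 h with hc
  have hch : (h : ℝ) ≤ 2 ^ c := by
    exact_mod_cast Nat.cast_le.mpr (Nat.le_pow_clog (by norm_num) h)
  have step : TT h w h ≤ ∑ j ∈ Finset.Icc 1 h, (w j / Wt h w + (1/2:ℝ) ^ (2*c+2)) :=
    Finset.sum_le_sum fun j hj => qq_le hh hw hj
  have e1 : ∑ j ∈ Finset.Icc 1 h, (w j / Wt h w + (1/2:ℝ) ^ (2*c+2))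
      = 1 + (Finset.Icc 1 h).card * (1/2:ℝ) ^ (2*c+2) := by
    rw [Finset.sum_add_distrib, Finset.sum_const, ← Finset.sum_div]
    rw [show (∑ j ∈ Finset.Icc 1 h, w j) = Wt h w from rfl, div_self (ne_of_gt hWpos)]
    simp [nsmul_eq_mul]
  have e2 : ((Finset.Icc 1 h).card : ℝ) = h := by
    rw [Nat.card_Icc]; push_cast; ring_nf
  have hb : (h:ℝ) * (1/2:ℝ) ^ (2*c+2) ≤ 1 := by
    have hexp : (2:ℝ) ^ (2*c+2) = 2^c * 2^c * 4 := by
      rw [show 2*c+2 = c+(c+2) by ring, pow_add, pow_add]; norm_num; ring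
    have hpow : ((1:ℝ)/2) ^ (2*c+2) = (2^c)⁻¹ * ((2:ℝ)^c)⁻¹ * (4:ℝ)⁻¹ := by
      rw [div_pow, one_pow, one_div, hexp, mul_inv, mul_inv]
    rw [hpow]
    have hhpos : (0:ℝ) < h := by exact_mod_cast Nat.pos_of_ne_zero (by omega)
    have hinv : ((2:ℝ)^c)⁻¹ ≤ (h:ℝ)⁻¹ := inv_anti₀ hhpos hch
    have h0 : (0:ℝ) ≤ ((2:ℝ)^c)⁻¹ := by positivity
    have h0h : (0:ℝ) ≤ (h:ℝ)⁻¹ := by positivity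
    calc (h:ℝ) * (((2:ℝ)^c)⁻¹ * ((2:ℝ)^c)⁻¹ * (4:ℝ)⁻¹)
        ≤ (h:ℝ) * ((h:ℝ)⁻¹ * (h:ℝ)⁻¹ * (4:ℝ)⁻¹) := by
          apply mul_le_mul_of_nonneg_left _ (le_of_lt hhpos)
          apply mul_le_mul_of_nonneg_right _ (by norm_num)
          exact mul_le_mul hinv hinv h0 h0h
      _ = (h:ℝ)⁻¹ * (4:ℝ)⁻¹ := by field_simp
      _ ≤ 1 := by
          have : (h:ℝ)⁻¹ ≤ 1 := by
            rw [inv_le_one_iff₀]; right; exact_mod_cast hh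
          nlinarith
  calc TT h w h ≤ 1 + (Finset.Icc 1 h).card * (1/2:ℝ) ^ (2*c+2) := by rw [← e1]; exact step
    _ = 1 + (h:ℝ) * (1/2:ℝ) ^ (2*c+2) := by rw [e2]
    _ ≤ 2 := by linarith

lemma pow_LL_eq (i : ℕ) : (2:ℝ) ^ (LL h w i) = 2 ^ (LL h w i - 1) * 2 := by
  have hL : LL h w i - 1 + 1 = LL h w i := by unfold LL; omega
  rw [← hL, pow_succ, hL]

lemma aa_low (i : ℕ) : TT h w (i-1) / 2 < aa h w i := by
  have hpos : (0:ℝ) < 2 ^ (LL h w i) := by positivity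
  have hfl : TT h w (i-1) * 2 ^ (LL h w i - 1) < (nn h w i : ℝ) := by
    unfold nn; push_cast; exact Nat.lt_floor_add_one _
  unfold aa
  rw [div_lt_div_iff₀ (by norm_num) hpos]
  calc TT h w (i-1) * 2 ^ (LL h w i) = (TT h w (i-1) * 2 ^ (LL h w i - 1)) * 2 := by
        rw [pow_LL_eq]; ring
    _ < (nn h w i : ℝ) * 2 := by linarith

lemma qq_mul_pow (i : ℕ) : qq h w i * 2 ^ (LL h w i - 1) = 4 := by
  unfold qq LL
  rw [show mm h w i + 3 - 1 = mm h w i + 2 by omega, div_pow, one_pow, one_div, pow_add]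
  have h0 : ((2:ℝ)^(mm h w i)) ≠ 0 := by positivity
  field_simp
  norm_num

lemma aa_high {i : ℕ} (hi : 1 ≤ i) :
    aa h w i + 1 / 2 ^ (LL h w i) ≤ TT h w i / 2 := by
  have hpos : (0:ℝ) < 2 ^ (LL h w i) := by positivity
  have hfl : (nn h w i : ℝ) ≤ TT h w (i-1) * 2 ^ (LL h w i - 1) + 1 := by
    unfold nn; push_cast
    linarith [Nat.floor_le (mul_nonneg (TT_nonneg (h := h) (w := w) (i-1))
      (show (0:ℝ) ≤ 2 ^ (LL h w i - 1) by positivity))]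
  unfold aa
  rw [← add_div, div_le_div_iff₀ hpos (by norm_num)]
  calc ((nn h w i : ℝ) + 1) * 2 ≤ (TT h w (i-1) * 2 ^ (LL h w i - 1) + 2) * 2 := by linarith
    _ ≤ (TT h w (i-1) * 2 ^ (LL h w i - 1) + qq h w i * 2 ^ (LL h w i - 1)) * 2 := by
        rw [qq_mul_pow]; linarith
    _ = TT h w i * 2 ^ (LL h w i) := by
        rw [TT_succ hi, pow_LL_eq]; ring

lemma nn_lt (hh : 1 ≤ h) (hw : ∀ i ∈ Finset.Icc 1 h, 0 < w i)
    {i : ℕ} (hi : i ∈ Finset.Icc 1 h) : nn h w i < 2 ^ (LL h w i) := by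
  have hi1 : 1 ≤ i := (Finset.mem_Icc.mp hi).1
  have hih : i ≤ h := (Finset.mem_Icc.mp hi).2
  have h1 := aa_high (h := h) (w := w) hi1
  have h2 : TT h w i ≤ 2 := le_trans (TT_mono hih) (TT_le_two hh hw)
  have hpos : (0:ℝ) < 2 ^ (LL h w i) := by positivity
  have : ((nn h w i : ℝ) + 1) / 2 ^ (LL h w i) ≤ 1 := by
    unfold aa at h1
    rw [← add_div] at h1
    calc ((nn h w i : ℝ) + 1) / 2 ^ (LL h w i) ≤ TT h w i / 2 := h1
      _ ≤ 1 := by linarith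
  rw [div_le_one hpos] at this
  have : (nn h w i : ℝ) < 2 ^ (LL h w i) := by linarith
  exact_mod_cast this

lemma aa_ord (hh : 1 ≤ h) (hw : ∀ i ∈ Finset.Icc 1 h, 0 < w i)
    {i j : ℕ} (hi : i ∈ Finset.Icc 1 h) (hj : j ∈ Finset.Icc 1 h) (hij : i < j) :
    aa h w i < aa h w j := by
  have hi1 : 1 ≤ i := (Finset.mem_Icc.mp hi).1
  have hpos : (0:ℝ) < 1 / 2 ^ (LL h w i) := by positivity
  calc aa h w i < aa h w i + 1 / 2 ^ (LL h w i) := by linarith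
    _ ≤ TT h w i / 2 := aa_high hi1
    _ ≤ TT h w (j-1) / 2 := by
        have : TT h w i ≤ TT h w (j-1) := TT_mono (by omega)
        linarith
    _ < aa h w j := aa_low j

end RowCode
namespace RowCode

variable {h : ℕ} {w : ℕ → ℝ}

lemma cs_not_prefix (hh : 1 ≤ h) (hw : ∀ i ∈ Finset.Icc 1 h, 0 < w i)
    {i j : ℕ} (hi : i ∈ Finset.Icc 1 h) (hj : j ∈ Finset.Icc 1 h) (hij : i ≠ j) :
    ¬ (cs h w i <+: cs h w j) := by
  intro hpre
  have hLle : LL h w i ≤ LL h w j := by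
    have := hpre.length_le
    simpa [cs] using this
  set Δ := LL h w j - LL h w i with hΔ
  have htake : (cs h w j).take (LL h w i) = cs h w i := by
    obtain ⟨t, ht⟩ := hpre
    rw [← ht]
    exact List.take_left' (by simp [cs])
  have htake2 : (cs h w j).take (LL h w i) = toBits (LL h w i) (nn h w j / 2 ^ Δ) := by
    unfold cs
    rw [toBits_take hLle]
  have hnnj := nn_lt hh hw hj
  have hnni := nn_lt hh hw hi
  have hdivlt : nn h w j / 2 ^ Δ < 2 ^ (LL h w i) := by
    rw [Nat.div_lt_iff_lt_mul (by positivity), ← pow_add]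
    have : LL h w i + Δ = LL h w j := by omega
    rw [this]; exact hnnj
  have heq : nn h w i = nn h w j / 2 ^ Δ := by
    apply toBits_inj hnni hdivlt
    rw [← htake2, htake]
    rfl
  -- numeric consequences
  have h1 : nn h w i * 2 ^ Δ ≤ nn h w j := by
    calc nn h w i * 2 ^ Δ = (nn h w j / 2 ^ Δ) * 2 ^ Δ := by rw [heq]
      _ ≤ nn h w j := Nat.div_mul_le_self ..
  have h2 : nn h w j < (nn h w i + 1) * 2 ^ Δ := by
    rw [heq]
    exact (Nat.div_lt_iff_lt_mul (by positivity)).mp (Nat.lt_succ_self _)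
  have hpowΔ : (2:ℝ) ^ (LL h w j) = 2 ^ (LL h w i) * 2 ^ Δ := by
    rw [← pow_add]; congr 1; omega
  have hposured : (0:ℝ) < 2 ^ (LL h w i) := by positivity
  have hposj : (0:ℝ) < 2 ^ (LL h w j) := by positivity
  have hposΔ : (0:ℝ) < 2 ^ Δ := by positivity
  have hr1 : aa h w i ≤ aa h w j := by
    unfold aa
    rw [div_le_div_iff₀ hposured hposj, hpowΔ]
    have : ((nn h w i * 2 ^ Δ : ℕ) : ℝ) ≤ ((nn h w j : ℕ) : ℝ) := by exact_mod_cast h1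
    push_cast at this ⊢
    nlinarith
  have hr2 : aa h w j < aa h w i + 1 / 2 ^ (LL h w i) := by
    unfold aa
    rw [← add_div, div_lt_div_iff₀ hposj hposured, hpowΔ]
    have : ((nn h w j : ℕ) : ℝ) < (((nn h w i + 1) * 2 ^ Δ : ℕ) : ℝ) := by exact_mod_cast h2
    push_cast at this ⊢
    nlinarith
  have hi1 : 1 ≤ i := (Finset.mem_Icc.mp hi).1
  have hj1 : 1 ≤ j := (Finset.mem_Icc.mp hj).1
  rcases Nat.lt_or_ge i j with hlt | hge
  · -- i < j
    have : aa h w j < TT h w (j-1) / 2 := by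
      calc aa h w j < aa h w i + 1 / 2 ^ (LL h w i) := hr2
        _ ≤ TT h w i / 2 := aa_high hi1
        _ ≤ TT h w (j-1) / 2 := by
            have := TT_mono (h := h) (w := w) (show i ≤ j - 1 by omega)
            linarith
    linarith [aa_low (h := h) (w := w) j]
  · have hjlt : j < i := by omega
    have hA := aa_high (h := h) (w := w) hj1
    have hB := aa_low (h := h) (w := w) i
    have hC : TT h w j ≤ TT h w (i-1) := TT_mono (by omega)
    have hD : (0:ℝ) < 1 / 2 ^ (LL h w j) := by positivity
    linarith

lemma splitCond_lt (hh : 1 ≤ h) (hw : ∀ i ∈ Finset.Icc 1 h, 0 < w i)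
    {i j m : ℕ} (hi : i ∈ Finset.Icc 1 h) (hj : j ∈ Finset.Icc 1 h)
    (hs : splitCond m (cs h w i) (cs h w j)) : i < j := by
  have hlt := split_lt (nn_lt hh hw hi) (nn_lt hh hw hj) hs
  have haa : aa h w i < aa h w j := by
    unfold aa
    rw [div_lt_div_iff₀ (by positivity) (by positivity)]
    exact_mod_cast hlt
  by_contra hc
  push_neg at hc
  rcases Nat.lt_or_ge j i with hlt2 | hge2
  · exact absurd (aa_ord hh hw hj hi hlt2) (by linarith)
  · have : i = j := by omega
    subst this
    exact absurd haa (by linarith)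

lemma splitCond_exists (hh : 1 ≤ h) (hw : ∀ i ∈ Finset.Icc 1 h, 0 < w i)
    {i j : ℕ} (hi : i ∈ Finset.Icc 1 h) (hj : j ∈ Finset.Icc 1 h) (hij : i < j) :
    splitCond (lcpLen (cs h w i) (cs h w j)) (cs h w i) (cs h w j) := by
  have hne : i ≠ j := by omega
  have hu := cs_not_prefix hh hw hi hj hne
  have hv := cs_not_prefix hh hw hj hi (by omega)
  obtain ⟨x, y, hx, hy, hxy⟩ := lcpLen_bits hu hv
  have htk := lcpLen_take (cs h w i) (cs h w j)
  cases x with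
  | false =>
    cases y with
    | true => exact ⟨htk, hx, hy⟩
    | false => exact absurd rfl hxy
  | true =>
    cases y with
    | true => exact absurd rfl hxy
    | false =>
      -- then j < i, contradiction
      exfalso
      have : splitCond (lcpLen (cs h w i) (cs h w j)) (cs h w j) (cs h w i) :=
        ⟨htk.symm, hy, hx⟩
      have := splitCond_lt hh hw hj hi this
      omega

end RowCode
namespace RowCode

noncomputable section

def tp (h : ℕ) (w : ℕ → ℝ) (i : ℕ) : ℕ :=
  if i < h then lcpLen (cs h w i) (cs h w (i+1)) else LL h w i

def tm (h : ℕ) (w : ℕ → ℝ) (i : ℕ) : ℕ :=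
  if 1 < i then lcpLen (cs h w (i-1)) (cs h w i) else LL h w i

def lbl (h : ℕ) (w : ℕ → ℝ) (i : ℕ) : List Bool :=
  enc (tm h w i) ++ (enc (tp h w i) ++ cs h w i)

end

variable {h : ℕ} {w : ℕ → ℝ}

lemma dec_lbl (i : ℕ) : dec (lbl h w i) = some (tm h w i, enc (tp h w i) ++ cs h w i) :=
  dec_enc ..

lemma dec_lbl2 (i : ℕ) : dec (enc (tp h w i) ++ cs h w i) = some (tp h w i, cs h w i) :=
  dec_enc ..

lemma Adec_eq {u v : List Bool} (hne : u ≠ v) {am bm ap bp : ℕ} {u1 v1 c c' : List Bool}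
    (h1 : dec u = some (am, u1)) (h2 : dec v = some (bm, v1))
    (h3 : dec u1 = some (ap, c)) (h4 : dec v1 = some (bp, c')) :
    Adec u v = if ap = bm ∧ splitCond ap c c' then some 1
      else if bp = am ∧ splitCond bp c' c then some (-1) else none := by
  rw [Adec, if_neg hne]
  simp only [h1, h2, h3, h4]

lemma lbl_not_prefix (hh : 1 ≤ h) (hw : ∀ i ∈ Finset.Icc 1 h, 0 < w i)
    {i j : ℕ} (hi : i ∈ Finset.Icc 1 h) (hj : j ∈ Finset.Icc 1 h) (hij : i ≠ j) :
    ¬ (lbl h w i <+: lbl h w j) := by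
  intro hpre
  obtain ⟨z, hz⟩ := hpre
  have e1 : lbl h w j = enc (tm h w i) ++ (enc (tp h w i) ++ (cs h w i ++ z)) := by
    rw [← hz]; simp [lbl]
  have e2 := dec_lbl (h := h) (w := w) j
  rw [e1, dec_enc] at e2
  have e3 : enc (tp h w i) ++ (cs h w i ++ z) = enc (tp h w j) ++ cs h w j := by
    have := Option.some.inj e2
    exact congrArg Prod.snd this
  have e4 : dec (enc (tp h w i) ++ (cs h w i ++ z)) = some (tp h w i, cs h w i ++ z) :=
    dec_enc ..
  rw [e3, dec_enc] at e4
  have e5 : cs h w i ++ z = cs h w j := by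
    have := Option.some.inj e4
    exact (congrArg Prod.snd this).symm
  exact cs_not_prefix hh hw hi hj hij ⟨z, e5⟩

lemma lbl_ne (hh : 1 ≤ h) (hw : ∀ i ∈ Finset.Icc 1 h, 0 < w i)
    {i j : ℕ} (hi : i ∈ Finset.Icc 1 h) (hj : j ∈ Finset.Icc 1 h) (hij : i ≠ j) :
    lbl h w i ≠ lbl h w j := by
  intro he
  exact lbl_not_prefix hh hw hi hj hij (he ▸ List.prefix_refl _)

lemma tp_le (i : ℕ) : tp h w i ≤ 2 * Nat.clog 2 h + 5 := by
  have hmm : mm h w i ≤ 2 * Nat.clog 2 h + 2 := min_le_right _ _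
  unfold tp
  split
  · calc lcpLen (cs h w i) (cs h w (i+1)) ≤ (cs h w i).length := lcpLen_le_left ..
      _ = LL h w i := by simp [cs]
      _ ≤ 2 * Nat.clog 2 h + 5 := by unfold LL; omega
  · unfold LL; omega

lemma tm_le (i : ℕ) : tm h w i ≤ 2 * Nat.clog 2 h + 5 := by
  have hmm : mm h w i ≤ 2 * Nat.clog 2 h + 2 := min_le_right _ _
  unfold tm
  split
  · calc lcpLen (cs h w (i-1)) (cs h w i) ≤ (cs h w (i-1)).length := lcpLen_le_left ..
      _ = LL h w (i-1) := by simp [cs]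
      _ ≤ 2 * Nat.clog 2 h + 5 := by
        have : mm h w (i-1) ≤ 2 * Nat.clog 2 h + 2 := min_le_right _ _
        unfold LL; omega
  · unfold LL; omega

lemma lbl_length (i : ℕ) :
    (lbl h w i).length
      = (2 * Nat.log 2 (tm h w i + 1) + 1) + ((2 * Nat.log 2 (tp h w i + 1) + 1)
        + LL h w i) := by
  simp [lbl, enc_length, cs]

lemma clog_pow_le (hh : 1 ≤ h) : 2 ^ Nat.clog 2 h ≤ 2 * h := by
  rcases Nat.lt_or_ge h 2 with h2 | h2
  · have : h = 1 := by omega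
    subst this
    simp [Nat.clog_one_right]
  · have hlt := Nat.pow_pred_clog_lt_self (by norm_num : 1 < 2) (show 1 < h by omega)
    have hlt' : 2 ^ (Nat.clog 2 h - 1) < h := hlt
    have hcpos : 0 < Nat.clog 2 h := Nat.clog_pos (by norm_num) (by omega)
    have heq : 2 ^ Nat.clog 2 h = 2 * 2 ^ (Nat.clog 2 h - 1) := by
      rw [← pow_succ']
      congr 1
      omega
    omega

end RowCode
namespace RowCode

variable {h : ℕ} {w : ℕ → ℝ}

lemma len_bound (hh : 1 ≤ h) (hw : ∀ i ∈ Finset.Icc 1 h, 0 < w i)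
    {i : ℕ} (hi : i ∈ Finset.Icc 1 h) :
    ((lbl h w i).length : ℝ) ≤
      Real.logb 2 (Wt h w) - Real.logb 2 (w i) +
        100 * (Real.logb 2 (Real.logb 2 h + 2) + 1) := by
  have hWpos := Wt_pos hh hw
  have hwi := hw i hi
  set K := Nat.log 2 (2 * Nat.clog 2 h + 6) with hK
  -- natural-number length bound
  have hlen : (lbl h w i).length ≤ mm h w i + (4 * K + 5) := by
    rw [lbl_length]
    have h1 : Nat.log 2 (tm h w i + 1) ≤ K :=
      Nat.log_mono_right (by have := tm_le (h := h) (w := w) i; omega)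
    have h2 : Nat.log 2 (tp h w i + 1) ≤ K :=
      Nat.log_mono_right (by have := tp_le (h := h) (w := w) i; omega)
    unfold LL
    omega
  -- bound on mm
  have hx0 : 0 ≤ Real.logb 2 (Wt h w / w i) := by
    apply Real.logb_nonneg (by norm_num)
    rw [le_div_iff₀ hwi, one_mul]
    exact w_le_Wt hw hi
  have hmi : (mm h w i : ℝ) ≤ Real.logb 2 (Wt h w) - Real.logb 2 (w i) + 1 := by
    have h1 : (mm h w i : ℝ) ≤ (⌈Real.logb 2 (Wt h w / w i)⌉₊ : ℝ) := by
      exact_mod_cast min_le_left _ _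
    have h2 : (⌈Real.logb 2 (Wt h w / w i)⌉₊ : ℝ) < Real.logb 2 (Wt h w / w i) + 1 :=
      Nat.ceil_lt_add_one hx0
    have h3 : Real.logb 2 (Wt h w / w i) = Real.logb 2 (Wt h w) - Real.logb 2 (w i) :=
      Real.logb_div (ne_of_gt hWpos) (ne_of_gt hwi)
    linarith
  -- bound on K
  have hlogh0 : 0 ≤ Real.logb 2 (h : ℝ) := by
    apply Real.logb_nonneg (by norm_num)
    exact_mod_cast hh
  have hclogR : (Nat.clog 2 h : ℝ) ≤ Real.logb 2 (h : ℝ) + 1 := by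
    have h1 : ((2:ℝ)) ^ (Nat.clog 2 h) ≤ 2 * (h:ℝ) := by
      exact_mod_cast clog_pow_le hh
    have h2 : Real.logb 2 ((2:ℝ) ^ (Nat.clog 2 h)) ≤ Real.logb 2 (2 * (h:ℝ)) :=
      Real.logb_le_logb_of_le (by norm_num) (by positivity) h1
    rw [Real.logb_pow, Real.logb_self_eq_one (by norm_num)] at h2
    rw [Real.logb_mul (by norm_num) (by positivity),
      Real.logb_self_eq_one (by norm_num)] at h2
    linarith
  have hKR : (K : ℝ) ≤ 3 + Real.logb 2 (Real.logb 2 (h:ℝ) + 2) := by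
    have h1 : ((2:ℝ)) ^ K ≤ (2 * Nat.clog 2 h + 6 : ℕ) := by
      exact_mod_cast Nat.pow_log_le_self 2 (show 2 * Nat.clog 2 h + 6 ≠ 0 by omega)
    have h2 : ((2 * Nat.clog 2 h + 6 : ℕ) : ℝ) ≤ 8 * (Real.logb 2 (h:ℝ) + 2) := by
      push_cast
      linarith
    have h3 : ((2:ℝ)) ^ K ≤ 8 * (Real.logb 2 (h:ℝ) + 2) := le_trans h1 h2
    have h4 : Real.logb 2 ((2:ℝ) ^ K) ≤ Real.logb 2 (8 * (Real.logb 2 (h:ℝ) + 2)) :=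
      Real.logb_le_logb_of_le (by norm_num) (by positivity) h3
    rw [Real.logb_pow, Real.logb_self_eq_one (by norm_num)] at h4
    rw [Real.logb_mul (by norm_num) (by positivity)] at h4
    have h8 : Real.logb 2 (8:ℝ) = 3 := by
      rw [show (8:ℝ) = 2 ^ (3:ℕ) by norm_num, Real.logb_pow,
        Real.logb_self_eq_one (by norm_num)]
      norm_num
    rw [h8] at h4
    linarith
  have hy0 : 0 ≤ Real.logb 2 (Real.logb 2 (h:ℝ) + 2) := by
    apply Real.logb_nonneg (by norm_num)
    linarith
  have hlenR : ((lbl h w i).length : ℝ) ≤ (mm h w i : ℝ) + (4 * (K:ℝ) + 5) := by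
    exact_mod_cast hlen
  linarith

end RowCode
open RowCode

/-- row codes: there are a constant `C > 0` and a universal decoder
`A : {0,1}* × {0,1}* → {−1, 0, 1, ⊥}` (here `⊥ = none`) such that for every `h ≥ 1` and
positive weights `w` on `{1,…,h}` there is a prefix-free code `α` on `{1,…,h}` with
`|α(i)| ≤ log₂ W − log₂ w(i) + C(log₂(log₂ h + 2) + 1)` which lets `A` recognise
equality, successors and predecessors. -/
theorem row_code :
    ∃ C : ℝ, 0 < C ∧ ∃ A : List Bool → List Bool → Option ℤ,
      ∀ h : ℕ, 1 ≤ h → ∀ w : ℕ → ℝ, (∀ i ∈ Finset.Icc 1 h, 0 < w i) →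
        ∃ α : ℕ → List Bool,
          (∀ i ∈ Finset.Icc 1 h, ∀ j ∈ Finset.Icc 1 h, i ≠ j → ¬ (α i <+: α j)) ∧
          (∀ i ∈ Finset.Icc 1 h,
            ((α i).length : ℝ) ≤
              Real.logb 2 (∑ j ∈ Finset.Icc 1 h, w j) - Real.logb 2 (w i) +
                C * (Real.logb 2 (Real.logb 2 h + 2) + 1)) ∧
          (∀ i ∈ Finset.Icc 1 h, ∀ j ∈ Finset.Icc 1 h,
            (j = i → A (α i) (α j) = some 0) ∧
            (j = i + 1 → A (α i) (α j) = some 1) ∧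
            (i = j + 1 → A (α i) (α j) = some (-1)) ∧
            (j ≠ i ∧ j ≠ i + 1 ∧ i ≠ j + 1 → A (α i) (α j) = none)) := by
  refine ⟨100, by norm_num, Adec, ?_⟩
  intro h hh w hw
  refine ⟨lbl h w, ?_, ?_, ?_⟩
  · intro i hi j hj hij
    exact lbl_not_prefix hh hw hi hj hij
  · intro i hi
    exact len_bound hh hw hi
  · intro i hi j hj
    have hi1 : 1 ≤ i := (Finset.mem_Icc.mp hi).1
    have hih : i ≤ h := (Finset.mem_Icc.mp hi).2
    have hj1 : 1 ≤ j := (Finset.mem_Icc.mp hj).1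
    have hjh : j ≤ h := (Finset.mem_Icc.mp hj).2
    refine ⟨?_, ?_, ?_, ?_⟩
    · -- j = i
      intro he; subst he
      rw [Adec, if_pos rfl]
    · -- j = i + 1
      intro he; subst he
      have hne := lbl_ne hh hw hi hj (by omega)
      rw [Adec_eq hne (dec_lbl i) (dec_lbl (i+1)) (dec_lbl2 i) (dec_lbl2 (i+1))]
      have hilt : i < h := by omega
      have htpi : tp h w i = lcpLen (cs h w i) (cs h w (i+1)) := by
        simp [tp, hilt]
      have htmj : tm h w (i+1) = lcpLen (cs h w i) (cs h w (i+1)) := by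
        simp [tm, show 1 < i + 1 by omega]
      have hsp := splitCond_exists hh hw hi hj (by omega)
      rw [if_pos ⟨by rw [htpi, htmj], by rw [htpi]; exact hsp⟩]
    · -- i = j + 1
      intro he; subst he
      have hne := lbl_ne hh hw hi hj (by omega)
      rw [Adec_eq hne (dec_lbl (j+1)) (dec_lbl j) (dec_lbl2 (j+1)) (dec_lbl2 j)]
      have hneg1 : ¬ (tp h w (j+1) = tm h w j ∧
          splitCond (tp h w (j+1)) (cs h w (j+1)) (cs h w j)) := by
        rintro ⟨-, hsp⟩
        have := splitCond_lt hh hw hi hj hsp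
        omega
      rw [if_neg hneg1]
      have hjlt : j < h := by omega
      have htpj : tp h w j = lcpLen (cs h w j) (cs h w (j+1)) := by
        simp [tp, hjlt]
      have htmi : tm h w (j+1) = lcpLen (cs h w j) (cs h w (j+1)) := by
        simp [tm, show 1 < j + 1 by omega]
      have hsp := splitCond_exists hh hw hj hi (by omega)
      rw [if_pos ⟨by rw [htpj, htmi], by rw [htpj]; exact hsp⟩]
    · -- none of the three
      rintro ⟨hne1, hne2, hne3⟩
      have hne := lbl_ne hh hw hi hj (fun hee => hne1 hee.symm)
      rw [Adec_eq hne (dec_lbl i) (dec_lbl j) (dec_lbl2 i) (dec_lbl2 j)]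
      have hneg1 : ¬ (tp h w i = tm h w j ∧
          splitCond (tp h w i) (cs h w i) (cs h w j)) := by
        rintro ⟨heq, hsp⟩
        have hij : i < j := splitCond_lt hh hw hi hj hsp
        have hij2 : i + 2 ≤ j := by omega
        have hilt : i < h := by omega
        have hmem1 : i + 1 ∈ Finset.Icc 1 h := by
          simp [Finset.mem_Icc]; omega
        have hmem2 : j - 1 ∈ Finset.Icc 1 h := by
          simp [Finset.mem_Icc]; omega
        have htpi : tp h w i = lcpLen (cs h w i) (cs h w (i+1)) := by
          simp [tp, hilt]
        have hsp1 : splitCond (tp h w i) (cs h w i) (cs h w (i+1)) := by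
          rw [htpi]; exact splitCond_exists hh hw hi hmem1 (by omega)
        have htmj : tm h w j = lcpLen (cs h w (j-1)) (cs h w j) := by
          simp [tm, show 1 < j by omega]
        have hsp2 : splitCond (tp h w i) (cs h w (j-1)) (cs h w j) := by
          rw [heq, htmj]; exact splitCond_exists hh hw hmem2 hj (by omega)
        have hcomb : splitCond (tp h w i) (cs h w (j-1)) (cs h w (i+1)) := by
          refine ⟨?_, hsp2.2.1, hsp1.2.2⟩
          rw [hsp2.1, ← hsp.1, hsp1.1]
        have := splitCond_lt hh hw hmem2 hmem1 hcomb
        omega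
      rw [if_neg hneg1]
      have hneg2 : ¬ (tp h w j = tm h w i ∧
          splitCond (tp h w j) (cs h w j) (cs h w i)) := by
        rintro ⟨heq, hsp⟩
        have hji : j < i := splitCond_lt hh hw hj hi hsp
        have hji2 : j + 2 ≤ i := by omega
        have hjlt : j < h := by omega
        have hmem1 : j + 1 ∈ Finset.Icc 1 h := by
          simp [Finset.mem_Icc]; omega
        have hmem2 : i - 1 ∈ Finset.Icc 1 h := by
          simp [Finset.mem_Icc]; omega
        have htpj : tp h w j = lcpLen (cs h w j) (cs h w (j+1)) := by
          simp [tp, hjlt]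
        have hsp1 : splitCond (tp h w j) (cs h w j) (cs h w (j+1)) := by
          rw [htpj]; exact splitCond_exists hh hw hj hmem1 (by omega)
        have htmi : tm h w i = lcpLen (cs h w (i-1)) (cs h w i) := by
          simp [tm, show 1 < i by omega]
        have hsp2 : splitCond (tp h w j) (cs h w (i-1)) (cs h w i) := by
          rw [heq, htmi]; exact splitCond_exists hh hw hmem2 hi (by omega)
        have hcomb : splitCond (tp h w j) (cs h w (i-1)) (cs h w (j+1)) := by
          refine ⟨?_, hsp2.2.1, hsp1.2.2⟩
          rw [hsp2.1, ← hsp.1, hsp1.1]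
        have := splitCond_lt hh hw hmem2 hmem1 hcomb
        omega
      rw [if_neg hneg2]
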